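/- For every positive integer k and every complex number s = σ + it with q_3·k + 4·log 3 ≤ σ ≤ q_2·k − 2, the k-th derivative of the Riemann zeta function does not vanish at s, i.e. iteratedDeriv k riemannZeta s ≠ 0. -/

import Mathlib

/-- `q M = log(log M / log(M+1)) / log(M/(M+1))`, the slope of the `M`-th critical line. -/
noncomputable def q (M : ℕ) : ℝ :=
  Real.log (Real.log M / Real.log ((M : ℝ) + 1)) / Real.log ((M : ℝ) / ((M : ℝ) + 1))

namespace ZetaDerivAux

open Real Finset

lemma log98_bounds : |Real.log (9/8) - 15/128| ≤ 1/448 := by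
  have h := Real.abs_log_sub_add_sum_range_le (x := -(1/8)) (by rw [show |(-(1/8):ℝ)| = 1/8 by norm_num]; norm_num) 2
  rw [Finset.sum_range_succ, Finset.sum_range_succ, Finset.sum_range_zero] at h
  rw [show |(-(1/8):ℝ)| = 1/8 by rw [abs_neg]; norm_num] at h
  norm_num at h
  rw [abs_le] at h ⊢
  constructor <;> [linarith [h.1]; linarith [h.2]]

lemma log3_eq : Real.log 3 = (3 * Real.log 2 + Real.log (9/8)) / 2 := by
  have h9 : Real.log (9/8) = Real.log 9 - Real.log 8 := Real.log_div (by norm_num) (by norm_num)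
  have h92 : Real.log 9 = 2 * Real.log 3 := by
    rw [show (9:ℝ) = 3 ^ 2 by norm_num, Real.log_pow]; push_cast; ring
  have h82 : Real.log 8 = 3 * Real.log 2 := by
    rw [show (8:ℝ) = 2 ^ 3 by norm_num, Real.log_pow]; push_cast; ring
  rw [h9, h92, h82] at *; linarith

lemma log3_lb : (1.0971 : ℝ) < Real.log 3 := by
  have h := log98_bounds
  have h2 := Real.log_two_gt_d9
  rw [abs_le] at h
  rw [log3_eq]; linarith [h.1]

lemma log3_ub : Real.log 3 < (1.0995 : ℝ) := by
  have h := log98_bounds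
  have h2 := Real.log_two_lt_d9
  rw [abs_le] at h
  rw [log3_eq]; linarith [h.2]

lemma log2_pos' : (0:ℝ) < Real.log 2 := Real.log_pos (by norm_num)
lemma log3_pos' : (0:ℝ) < Real.log 3 := Real.log_pos (by norm_num)
lemma log4_eq : Real.log 4 = 2 * Real.log 2 := by
  rw [show (4:ℝ) = 2 ^ 2 by norm_num, Real.log_pow]; push_cast; ring
lemma log4_pos' : (0:ℝ) < Real.log 4 := Real.log_pos (by norm_num)
lemma log3_lt_log4 : Real.log 3 < Real.log 4 := Real.log_lt_log (by norm_num) (by norm_num)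
lemma log2_lt_log3 : Real.log 2 < Real.log 3 := Real.log_lt_log (by norm_num) (by norm_num)

lemma q3_eq : q 3 * Real.log (4/3) = Real.log (Real.log 4 / Real.log 3) := by
  have h1 : Real.log ((3:ℝ)/4) = Real.log 3 - Real.log 4 := Real.log_div (by norm_num) (by norm_num)
  have h2 : Real.log ((4:ℝ)/3) = Real.log 4 - Real.log 3 := Real.log_div (by norm_num) (by norm_num)
  have h3 : Real.log (Real.log 3 / Real.log 4) = Real.log (Real.log 3) - Real.log (Real.log 4) :=
    Real.log_div (ne_of_gt log3_pos') (ne_of_gt log4_pos')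
  have h4 : Real.log (Real.log 4 / Real.log 3) = Real.log (Real.log 4) - Real.log (Real.log 3) :=
    Real.log_div (ne_of_gt log4_pos') (ne_of_gt log3_pos')
  have hne : Real.log 3 - Real.log 4 ≠ 0 := by linarith [log3_lt_log4]
  unfold q
  push_cast
  rw [show ((3:ℝ)+1) = 4 by norm_num, h1, h2, h3, h4]
  field_simp
  ring

lemma q2_eq : q 2 * Real.log (3/2) = Real.log (Real.log 3 / Real.log 2) := by
  have h1 : Real.log ((2:ℝ)/3) = Real.log 2 - Real.log 3 := Real.log_div (by norm_num) (by norm_num)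
  have h2 : Real.log ((3:ℝ)/2) = Real.log 3 - Real.log 2 := Real.log_div (by norm_num) (by norm_num)
  have h3 : Real.log (Real.log 2 / Real.log 3) = Real.log (Real.log 2) - Real.log (Real.log 3) :=
    Real.log_div (ne_of_gt log2_pos') (ne_of_gt log3_pos')
  have h4 : Real.log (Real.log 3 / Real.log 2) = Real.log (Real.log 3) - Real.log (Real.log 2) :=
    Real.log_div (ne_of_gt log3_pos') (ne_of_gt log2_pos')
  have hne : Real.log 2 - Real.log 3 ≠ 0 := by linarith [log2_lt_log3]
  unfold q
  push_cast
  rw [show ((2:ℝ)+1) = 3 by norm_num, h1, h2, h3, h4]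
  field_simp
  ring

lemma q3_ge : (4:ℝ)/5 ≤ q 3 := by
  have h43 : (0:ℝ) < Real.log (4/3) := Real.log_pos (by norm_num)
  have key : (4:ℝ)/5 * Real.log (4/3) ≤ Real.log (Real.log 4 / Real.log 3) := by
    have hrpow : ((4:ℝ)/3) ^ ((4:ℝ)/5) ≤ Real.log 4 / Real.log 3 := by
      have hb : (0:ℝ) ≤ (4:ℝ)/3 := by norm_num
      have h5 : (((4:ℝ)/3) ^ ((4:ℝ)/5)) ^ (5:ℕ) = ((4:ℝ)/3) ^ (4:ℕ) := by
        rw [← Real.rpow_natCast (((4:ℝ)/3) ^ ((4:ℝ)/5)) 5, ← Real.rpow_mul hb,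
          show ((4:ℝ)/5) * (5:ℕ) = (4:ℕ) by push_cast; ring, Real.rpow_natCast]
      have hq : Real.log 4 / Real.log 3 ≥ 2 * 0.6931471803 / 1.0995 := by
        have := Real.log_two_gt_d9
        have := log3_ub
        have := log3_pos'
        rw [ge_iff_le, div_le_div_iff₀ (by norm_num) log3_pos', log4_eq]
        nlinarith
      refine le_of_pow_le_pow_left₀ (show (5:ℕ) ≠ 0 by norm_num) (by positivity) ?_
      rw [h5]
      calc ((4:ℝ)/3) ^ (4:ℕ) ≤ (2 * 0.6931471803 / 1.0995) ^ (5:ℕ) := by norm_num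
        _ ≤ (Real.log 4 / Real.log 3) ^ (5:ℕ) := by
            apply pow_le_pow_left₀ (by norm_num) hq
    calc (4:ℝ)/5 * Real.log (4/3) = Real.log (((4:ℝ)/3) ^ ((4:ℝ)/5)) := by
          rw [Real.log_rpow (by norm_num)]
      _ ≤ Real.log (Real.log 4 / Real.log 3) := by
          apply Real.log_le_log (by positivity) hrpow
  have hmul : (q 3 - 4/5) * Real.log (4/3) = Real.log (Real.log 4 / Real.log 3) - 4/5 * Real.log (4/3) := by
    rw [sub_mul, q3_eq]
  nlinarith [hmul]

lemma log5_ub : Real.log 5 ≤ 2 * Real.log 2 + 1/4 := by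
  have h : Real.log 5 = Real.log 4 + Real.log (5/4) := by
    rw [← Real.log_mul (by norm_num) (by norm_num)]; norm_num
  have h54 : Real.log ((5:ℝ)/4) ≤ 5/4 - 1 := by
    have := Real.log_le_sub_one_of_pos (show (0:ℝ) < 5/4 by norm_num)
    linarith
  rw [h, log4_eq]; linarith

lemma rpow53 : (3/2 : ℝ) ≤ ((5:ℝ)/3) ^ ((4:ℝ)/5) := by
  have hb : (0:ℝ) ≤ (5:ℝ)/3 := by norm_num
  have h5 : (((5:ℝ)/3) ^ ((4:ℝ)/5)) ^ (5:ℕ) = ((5:ℝ)/3) ^ (4:ℕ) := by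
    rw [← Real.rpow_natCast (((5:ℝ)/3) ^ ((4:ℝ)/5)) 5, ← Real.rpow_mul hb,
      show ((4:ℝ)/5) * (5:ℕ) = (4:ℕ) by push_cast; ring, Real.rpow_natCast]
  refine le_of_pow_le_pow_left₀ (show (5:ℕ) ≠ 0 by norm_num) (by positivity) ?_
  rw [h5]; norm_num

/-- Main sub-linear bound on `log`: for `x ≥ 5`, `log x ≤ log 3 * (x/3)^(4/5)`. -/
lemma logx_le {x : ℝ} (hx : 5 ≤ x) : Real.log x ≤ Real.log 3 * (x/3) ^ ((4:ℝ)/5) := by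
  have hx5 : (1:ℝ) ≤ x/5 := by linarith
  have hx5' : (0:ℝ) < x/5 := by linarith
  set t := (x/5) ^ ((4:ℝ)/5) with ht
  have ht1 : 1 ≤ t := Real.one_le_rpow hx5 (by norm_num)
  have htpos : 0 < t := by positivity
  set B := Real.log 3 * ((5:ℝ)/3) ^ ((4:ℝ)/5) with hB
  have hBlb : 3/2 * 1.0971 ≤ B := by
    have h1 := rpow53
    have h2 := log3_lb
    have : (0:ℝ) < ((5:ℝ)/3) ^ ((4:ℝ)/5) := by positivity
    nlinarith
  have hB5 : Real.log 5 ≤ B := by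
    have := log5_ub
    have := Real.log_two_lt_d9
    linarith
  have hB54 : (5:ℝ)/4 ≤ B := by linarith
  have hsplit : Real.log x = Real.log 5 + (5/4) * Real.log t := by
    have hlt : Real.log t = (4/5) * Real.log (x/5) := Real.log_rpow hx5' _
    have : Real.log (x/5) = Real.log x - Real.log 5 := Real.log_div (by linarith) (by norm_num)
    rw [hlt, this]; ring
  have hlogt : Real.log t ≤ t - 1 := Real.log_le_sub_one_of_pos htpos
  have hrhs : Real.log 3 * (x/3) ^ ((4:ℝ)/5) = B * t := by
    rw [hB, ht, mul_assoc, ← Real.mul_rpow (by norm_num) (le_of_lt hx5')]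
    norm_num
  rw [hsplit, hrhs]
  nlinarith [mul_nonneg (show (0:ℝ) ≤ B - 5/4 by linarith) (show (0:ℝ) ≤ t - 1 by linarith)]

/-- exp-form of the generic term. -/
lemma term_exp (k : ℕ) (σ : ℝ) {m : ℝ} (hm : 1 < m) :
    (Real.log m) ^ k / m ^ σ = Real.exp (k * Real.log (Real.log m) - σ * Real.log m) := by
  have hlm : 0 < Real.log m := Real.log_pos hm
  rw [Real.exp_sub, Real.exp_nat_mul, Real.exp_log hlm]
  rw [Real.rpow_def_of_pos (by linarith : (0:ℝ) < m), mul_comm (Real.log m) σ]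

/-- The central comparison: for `n ≥ 4`, the `n`-th term is at most `(3/n)^(13/3)` times
the `3`rd term. -/
lemma key {k : ℕ} {σ : ℝ} (hσ : q 3 * k + 4 * Real.log 3 ≤ σ) {n : ℕ} (hn : 4 ≤ n) :
    Real.log n ^ k / (n:ℝ) ^ σ ≤ (3 / (n:ℝ)) ^ ((13:ℝ)/3) * (Real.log 3 ^ k / (3:ℝ) ^ σ) := by
  have hn1 : (1:ℝ) < (n:ℝ) := by
    have : (4:ℝ) ≤ (n:ℝ) := by exact_mod_cast hn
    linarith
  have hn3 : (3:ℝ) < (n:ℝ) := by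
    have : (4:ℝ) ≤ (n:ℝ) := by exact_mod_cast hn
    linarith
  have h3n : (0:ℝ) < 3/(n:ℝ) := by positivity
  have hlogn : 0 < Real.log n := Real.log_pos hn1
  have hD : Real.log 3 < Real.log n := Real.log_lt_log (by norm_num) hn3
  have h3nlog : Real.log (3/(n:ℝ)) = Real.log 3 - Real.log n :=
    Real.log_div (by norm_num) (by linarith)
  have hk0 : (0:ℝ) ≤ (k:ℝ) := Nat.cast_nonneg k
  have hq3 := q3_ge
  have hl3 := log3_lb
  have hkq : q 3 * k ≤ σ - 13/3 := by nlinarith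
  rw [term_exp k σ hn1, term_exp k σ (show (1:ℝ) < 3 by norm_num),
    Real.rpow_def_of_pos h3n, ← Real.exp_add, Real.exp_le_exp, h3nlog]
  -- goal : k * log (log n) - σ * log n ≤ (log 3 - log n) * (13/3) + (k * log (log 3) - σ * log 3)
  have main : (k:ℝ) * (Real.log (Real.log n) - Real.log (Real.log 3))
      ≤ (σ - 13/3) * (Real.log n - Real.log 3) := by
    rcases eq_or_lt_of_le hn with h4 | h5
    · -- n = 4
      subst h4
      have hc : ((4:ℕ):ℝ) = (4:ℝ) := by norm_num
      rw [hc]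
      have hll : Real.log (Real.log 4) - Real.log (Real.log 3) = q 3 * Real.log (4/3) := by
        rw [← q3_eq.symm, Real.log_div (ne_of_gt log4_pos') (ne_of_gt log3_pos')]
      have h43 : Real.log ((4:ℝ)/3) = Real.log 4 - Real.log 3 :=
        Real.log_div (by norm_num) (by norm_num)
      have hD4 : (0:ℝ) ≤ Real.log 4 - Real.log 3 := by linarith [log3_lt_log4]
      rw [hll, h43]
      nlinarith [mul_le_mul_of_nonneg_right hkq hD4]
    · -- n ≥ 5
      have hn5 : (5:ℝ) ≤ (n:ℝ) := by exact_mod_cast h5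
      have hlogle := logx_le hn5
      have hrp : (0:ℝ) < ((n:ℝ)/3) ^ ((4:ℝ)/5) := by
        have : (0:ℝ) < (n:ℝ)/3 := by linarith
        positivity
      have hup : Real.log (Real.log n) ≤ Real.log (Real.log 3) + (4/5) * (Real.log n - Real.log 3) := by
        have h1 : Real.log (Real.log n) ≤ Real.log (Real.log 3 * ((n:ℝ)/3) ^ ((4:ℝ)/5)) :=
          Real.log_le_log hlogn hlogle
        rw [Real.log_mul (ne_of_gt log3_pos') (ne_of_gt hrp),
          Real.log_rpow (by linarith : (0:ℝ) < (n:ℝ)/3),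
          Real.log_div (by linarith : (n:ℝ) ≠ 0) (by norm_num : (3:ℝ) ≠ 0)] at h1
        linarith
      have hD0 : (0:ℝ) ≤ Real.log n - Real.log 3 := by linarith
      have s1 : (k:ℝ) * (Real.log (Real.log n) - Real.log (Real.log 3))
          ≤ (k:ℝ) * ((4/5) * (Real.log n - Real.log 3)) :=
        mul_le_mul_of_nonneg_left (by linarith) hk0
      have s2 : (4:ℝ)/5 * (k:ℝ) ≤ q 3 * (k:ℝ) := mul_le_mul_of_nonneg_right hq3 hk0
      have s3 : q 3 * (k:ℝ) * (Real.log n - Real.log 3) ≤ (σ - 13/3) * (Real.log n - Real.log 3) :=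
        mul_le_mul_of_nonneg_right hkq hD0
      nlinarith [mul_le_mul_of_nonneg_right s2 hD0]
  nlinarith [main]

/-- Rational version of the comparison, with `(3/n)^(1/3) ≤ ρ`. -/
lemma key' {k : ℕ} {σ : ℝ} (hσ : q 3 * k + 4 * Real.log 3 ≤ σ) {n : ℕ} (hn : 4 ≤ n)
    {ρ : ℝ} (hρ0 : 0 ≤ ρ) (hρ : 3/(n:ℝ) ≤ ρ^3) :
    Real.log n ^ k / (n:ℝ) ^ σ
      ≤ (3/(n:ℝ))^(4:ℕ) * ρ * (Real.log 3 ^ k / (3:ℝ) ^ σ) := by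
  refine (key hσ hn).trans ?_
  have hn0 : (0:ℝ) < (n:ℝ) := by
    have : (4:ℝ) ≤ (n:ℝ) := by exact_mod_cast hn
    linarith
  have h3n : (0:ℝ) < 3/(n:ℝ) := by positivity
  have hsplit : (3/(n:ℝ)) ^ ((13:ℝ)/3) = (3/(n:ℝ))^(4:ℕ) * (3/(n:ℝ)) ^ ((1:ℝ)/3) := by
    rw [← Real.rpow_natCast (3/(n:ℝ)) 4, ← Real.rpow_add h3n]
    norm_num
  have hcube : (3/(n:ℝ)) ^ ((1:ℝ)/3) ≤ ρ := by
    refine le_of_pow_le_pow_left₀ (show (3:ℕ) ≠ 0 by norm_num) hρ0 ?_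
    rw [← Real.rpow_natCast ((3/(n:ℝ)) ^ ((1:ℝ)/3)) 3, ← Real.rpow_mul (le_of_lt h3n),
      show (1:ℝ)/3 * (3:ℕ) = 1 by push_cast; ring, Real.rpow_one]
    exact hρ
  have hT3 : (0:ℝ) ≤ Real.log 3 ^ k / (3:ℝ) ^ σ := by
    have := log3_pos'
    positivity
  rw [hsplit]
  have h4 : (0:ℝ) ≤ (3/(n:ℝ))^(4:ℕ) := by positivity
  nlinarith [mul_le_mul_of_nonneg_left hcube h4, mul_le_mul_of_nonneg_right
    (mul_le_mul_of_nonneg_left hcube h4) hT3]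

/-- The `n = 2` term is at most `4/9` of the `3`rd term. -/
lemma key2 {k : ℕ} {σ : ℝ} (hσ2 : σ ≤ q 2 * k - 2) :
    Real.log 2 ^ k / (2:ℝ) ^ σ ≤ 4/9 * (Real.log 3 ^ k / (3:ℝ) ^ σ) := by
  rw [term_exp k σ one_lt_two, term_exp k σ (show (1:ℝ) < 3 by norm_num),
    show (4:ℝ)/9 * Real.exp ((k:ℝ) * Real.log (Real.log 3) - σ * Real.log 3)
      = Real.exp (Real.log (4/9) + ((k:ℝ) * Real.log (Real.log 3) - σ * Real.log 3)) by
        rw [Real.exp_add, Real.exp_log (by norm_num : (0:ℝ) < 4/9)],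
    Real.exp_le_exp]
  have h32 : Real.log ((3:ℝ)/2) = Real.log 3 - Real.log 2 :=
    Real.log_div (by norm_num) (by norm_num)
  have h32pos : (0:ℝ) < Real.log ((3:ℝ)/2) := Real.log_pos (by norm_num)
  have hq2 : q 2 * Real.log ((3:ℝ)/2) = Real.log (Real.log 3) - Real.log (Real.log 2) := by
    rw [q2_eq, Real.log_div (ne_of_gt log3_pos') (ne_of_gt log2_pos')]
  have h49 : Real.log ((4:ℝ)/9) = 2 * Real.log 2 - 2 * Real.log 3 := by
    rw [Real.log_div (by norm_num) (by norm_num),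
      show (4:ℝ) = 2^2 by norm_num, show (9:ℝ) = 3^2 by norm_num,
      Real.log_pow, Real.log_pow]
    push_cast; ring
  have hσ' : σ * Real.log ((3:ℝ)/2) ≤ (q 2 * k - 2) * Real.log ((3:ℝ)/2) :=
    mul_le_mul_of_nonneg_right hσ2 (le_of_lt h32pos)
  have e : (q 2 * (k:ℝ) - 2) * Real.log ((3:ℝ)/2)
      = (k:ℝ) * (q 2 * Real.log ((3:ℝ)/2)) - 2 * Real.log ((3:ℝ)/2) := by ring
  rw [e, hq2] at hσ'
  rw [h32] at hσ'
  linarith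

lemma tele (N : ℕ) : (∑ i ∈ Finset.range N, (((i:ℝ)+8)^4)⁻¹)
    ≤ 1/1008 - (3*((N:ℝ)+6)*((N:ℝ)+7)*((N:ℝ)+8))⁻¹ := by
  induction N with
  | zero => norm_num
  | succ n ih =>
    rw [Finset.sum_range_succ]
    push_cast
    have hn0 : (0:ℝ) ≤ (n:ℝ) := Nat.cast_nonneg n
    have e : (3*((n:ℝ)+6)*((n:ℝ)+7)*((n:ℝ)+8))⁻¹ - (3*((n:ℝ)+1+6)*((n:ℝ)+1+7)*((n:ℝ)+1+8))⁻¹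
        = (((n:ℝ)+6)*((n:ℝ)+7)*((n:ℝ)+8)*((n:ℝ)+9))⁻¹ := by
      rw [show (n:ℝ)+1+6 = (n:ℝ)+7 by ring, show (n:ℝ)+1+7 = (n:ℝ)+8 by ring,
        show (n:ℝ)+1+8 = (n:ℝ)+9 by ring]
      rw [← one_div, ← one_div, ← one_div, div_sub_div _ _ (by positivity) (by positivity),
        div_eq_div_iff (by positivity) (by positivity)]
      ring
    have hstep : (((n:ℝ)+8)^4)⁻¹ ≤ (((n:ℝ)+6)*((n:ℝ)+7)*((n:ℝ)+8)*((n:ℝ)+9))⁻¹ := by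
      rw [inv_le_inv₀ (by positivity) (by positivity)]
      nlinarith [mul_nonneg (mul_nonneg hn0 hn0) hn0, mul_nonneg hn0 hn0]
    linarith [ih, hstep]

lemma tsum_tail : ∑' i : ℕ, (((i:ℝ)+8)^4)⁻¹ ≤ 1/1008 := by
  refine Real.tsum_le_of_sum_range_le (fun n => by positivity) fun N => (tele N).trans ?_
  have : (0:ℝ) < (3*((N:ℝ)+6)*((N:ℝ)+7)*((N:ℝ)+8))⁻¹ := by positivity
  linarith

lemma summable_tail : Summable (fun i : ℕ => (((i:ℝ)+8)^4)⁻¹) := by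
  have h : Summable (fun n : ℕ => ((n:ℝ)^4)⁻¹) := by
    have := summable_one_div_nat_pow.mpr (show 1 < 4 by norm_num)
    simpa [one_div] using this
  have h8 := (summable_nat_add_iff 8).mpr h
  refine h8.congr fun i => ?_
  push_cast
  ring_nf

end ZetaDerivAux

set_option maxHeartbeats 2000000 in
/-- For every positive integer `k` and every complex `s` with
`q 3 * k + 4 log 3 ≤ Re s ≤ q 2 * k - 2`, the `k`-th derivative of the Riemann zeta
function does not vanish at `s`. -/
theorem zeta_deriv_ne_zero_M3 (k : ℕ) (hk : 1 ≤ k) (s : ℂ)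
    (h1 : q 3 * k + 4 * Real.log 3 ≤ s.re)
    (h2 : s.re ≤ q 2 * k - 2) :
    iteratedDeriv k riemannZeta s ≠ 0 := by
  classical
  have hq3 := ZetaDerivAux.q3_ge
  have hl3 := ZetaDerivAux.log3_lb
  have hk0 : (0:ℝ) ≤ (k:ℝ) := Nat.cast_nonneg k
  have hq3k : (0:ℝ) ≤ q 3 * k := mul_nonneg (by linarith) hk0
  have hσ1 : 1 < s.re := by nlinarith
  -- the function (log n)^k
  have hiter : ∀ m : ℕ, LSeries.logMul^[m] (1 : ℕ → ℂ) = fun n : ℕ => (Complex.log n) ^ m := by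
    intro m
    induction m with
    | zero => funext n; simp
    | succ m ih =>
      funext n
      rw [Function.iterate_succ_apply', ih]
      simp only [LSeries.logMul]
      rw [pow_succ]
      ring
  set g : ℕ → ℂ := fun n : ℕ => (Complex.log n) ^ k with hgdef
  have habs : LSeries.abscissaOfAbsConv 1 < (s.re : EReal) := by
    rw [LSeries.abscissaOfAbsConv_one]
    exact_mod_cast hσ1
  have heq : iteratedDeriv k riemannZeta s = (-1)^k * LSeries g s := by
    have hopen : IsOpen {z : ℂ | 1 < z.re} := isOpen_lt continuous_const Complex.continuous_re
    have hEqOn : Set.EqOn (LSeries 1) riemannZeta {z : ℂ | 1 < z.re} := fun z hz =>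
      LSeries_one_eq_riemannZeta hz
    have h1' : iteratedDeriv k (LSeries 1) s = iteratedDeriv k riemannZeta s :=
      hEqOn.iteratedDeriv_of_isOpen hopen k hσ1
    rw [← h1', LSeries_iteratedDeriv k habs, hiter k]
  have hsum : LSeriesSummable g s := by
    have h := LSeriesSummable_of_abscissaOfAbsConv_lt_re (f := LSeries.logMul^[k] 1) (s := s)
      (by rw [LSeries.absicssaOfAbsConv_logPowMul, LSeries.abscissaOfAbsConv_one]
          exact_mod_cast hσ1)
    rwa [hiter k] at h
  -- norms of terms
  have hlognn : ∀ n : ℕ, |Real.log n| = Real.log n := by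
    intro n
    cases n with
    | zero => simp
    | succ m =>
      exact abs_of_nonneg (Real.log_nonneg (by exact_mod_cast Nat.succ_le_succ (Nat.zero_le m)))
  have hterm : ∀ n : ℕ, n ≠ 0 → ‖LSeries.term g s n‖ = Real.log n ^ k / (n:ℝ) ^ s.re := by
    intro n hn
    rw [LSeries.norm_term_eq, if_neg hn]
    congr 1
    simp only [hgdef]
    rw [norm_pow, ← Complex.natCast_log, Complex.norm_real, Real.norm_eq_abs, hlognn]
  set T3 : ℝ := Real.log 3 ^ k / (3:ℝ) ^ s.re with hT3def
  have hT3 : 0 < T3 := by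
    have h3 := ZetaDerivAux.log3_pos'
    positivity
  have hterm3 : ‖LSeries.term g s 3‖ = T3 := by
    rw [hterm 3 (by norm_num)]
    norm_num [hT3def]
  -- splitting off the 3rd term
  set v : ℕ → ℝ := fun n => ‖if n = 3 then 0 else LSeries.term g s n‖ with hvdef
  have hres_sum : Summable (fun n : ℕ => if n = 3 then 0 else LSeries.term g s n) := by
    have h3 : Summable (fun n : ℕ => if n = 3 then LSeries.term g s n else 0) :=
      summable_of_ne_finset_zero (s := {3}) (fun n hn => if_neg (by simpa using hn))
    have he : (fun n : ℕ => if n = 3 then 0 else LSeries.term g s n)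
        = fun n : ℕ => LSeries.term g s n - (if n = 3 then LSeries.term g s n else 0) := by
      funext n
      by_cases h : n = 3 <;> simp [h]
    rw [he]
    have hsum' : Summable (fun n : ℕ => LSeries.term g s n) := hsum
    exact hsum'.sub h3
  have hv : Summable v := summable_norm_iff.mpr hres_sum
  have hsplit : LSeries g s
      = LSeries.term g s 3 + ∑' n : ℕ, (if n = 3 then 0 else LSeries.term g s n) := by
    rw [LSeries]
    exact Summable.tsum_eq_add_tsum_ite hsum 3
  -- bounds on individual v n
  have hσ := h1
  have hv0 : v 0 = 0 := by simp [hvdef, LSeries.term_zero]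
  have hv1 : v 1 = 0 := by
    have hg1 : g 1 = 0 := by
      show Complex.log ((1:ℕ):ℂ) ^ k = 0
      rw [Nat.cast_one, Complex.log_one]
      exact zero_pow (by omega)
    have : LSeries.term g s 1 = 0 := by
      rw [LSeries.term_of_ne_zero (by norm_num), hg1, zero_div]
    simp [hvdef, this, hg1]
  have hv2 : v 2 ≤ 4/9 * T3 := by
    have h := ZetaDerivAux.key2 (k := k) (σ := s.re) h2
    simp only [hvdef, if_neg (show (2:ℕ) ≠ 3 by norm_num)]
    rw [hterm 2 (by norm_num)]
    rw [hT3def]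
    calc Real.log ((2:ℕ):ℝ) ^ k / ((2:ℕ):ℝ) ^ s.re
        = Real.log 2 ^ k / (2:ℝ) ^ s.re := by norm_num
      _ ≤ 4/9 * (Real.log 3 ^ k / (3:ℝ) ^ s.re) := h
  have hv3 : v 3 = 0 := by simp [hvdef]
  have hρgen : ∀ n : ℕ, 4 ≤ n → ∀ ρ : ℝ, 0 ≤ ρ → 3/(n:ℝ) ≤ ρ^3 →
      v n ≤ (3/(n:ℝ))^(4:ℕ) * ρ * T3 := by
    intro n hn ρ hρ0 hρ
    have h := ZetaDerivAux.key' (k := k) (σ := s.re) h1 hn hρ0 hρ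
    simp only [hvdef, if_neg (show n ≠ 3 by omega)]
    rw [hterm n (by omega), hT3def]
    exact h
  have hv4 : v 4 ≤ 81/256 * 0.909 * T3 := by
    have := hρgen 4 (le_refl 4) 0.909 (by norm_num) (by norm_num)
    calc v 4 ≤ (3/((4:ℕ):ℝ))^(4:ℕ) * 0.909 * T3 := this
      _ = 81/256 * 0.909 * T3 := by norm_num
  have hv5 : v 5 ≤ 81/625 * 0.844 * T3 := by
    have := hρgen 5 (by norm_num) 0.844 (by norm_num) (by norm_num)
    calc v 5 ≤ (3/((5:ℕ):ℝ))^(4:ℕ) * 0.844 * T3 := this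
      _ = 81/625 * 0.844 * T3 := by norm_num
  have hv6 : v 6 ≤ 1/16 * 0.794 * T3 := by
    have := hρgen 6 (by norm_num) 0.794 (by norm_num) (by norm_num)
    calc v 6 ≤ (3/((6:ℕ):ℝ))^(4:ℕ) * 0.794 * T3 := this
      _ = 1/16 * 0.794 * T3 := by norm_num
  have hv7 : v 7 ≤ 81/2401 * 0.754 * T3 := by
    have := hρgen 7 (by norm_num) 0.754 (by norm_num) (by norm_num)
    calc v 7 ≤ (3/((7:ℕ):ℝ))^(4:ℕ) * 0.754 * T3 := this
      _ = 81/2401 * 0.754 * T3 := by norm_num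
  -- tail bound
  have htail_pt : ∀ i : ℕ, v (i + 8) ≤ (81 * 0.722 * T3) * (((i:ℝ)+8)^4)⁻¹ := by
    intro i
    have hi0 : (0:ℝ) ≤ (i:ℝ) := Nat.cast_nonneg i
    have hcast : ((i + 8 : ℕ) : ℝ) = (i:ℝ) + 8 := by push_cast; ring
    have hρ : 3/((i+8:ℕ):ℝ) ≤ (0.722:ℝ)^3 := by
      have h38 : 3/((i+8:ℕ):ℝ) ≤ 3/8 := by
        rw [hcast]
        apply div_le_div_of_nonneg_left (by norm_num) (by norm_num) (by linarith)
      have : (3:ℝ)/8 ≤ (0.722:ℝ)^3 := by norm_num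
      linarith
    have h := hρgen (i+8) (by omega) 0.722 (by norm_num) hρ
    calc v (i+8) ≤ (3/((i+8:ℕ):ℝ))^(4:ℕ) * 0.722 * T3 := h
      _ = (81 * 0.722 * T3) * (((i:ℝ)+8)^4)⁻¹ := by
          rw [hcast, div_pow, div_eq_mul_inv, show (3:ℝ)^(4:ℕ) = 81 by norm_num]
          ring
  have hsum_tail : Summable (fun i : ℕ => (81 * 0.722 * T3) * (((i:ℝ)+8)^4)⁻¹) :=
    (ZetaDerivAux.summable_tail).mul_left _
  have hv_tail : Summable (fun i : ℕ => v (i + 8)) := (summable_nat_add_iff 8).mpr hv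
  have htail : ∑' i : ℕ, v (i + 8) ≤ 81 * 0.722 * (1/1008) * T3 := by
    calc ∑' i : ℕ, v (i + 8) ≤ ∑' i : ℕ, (81 * 0.722 * T3) * (((i:ℝ)+8)^4)⁻¹ :=
          Summable.tsum_le_tsum htail_pt hv_tail hsum_tail
      _ = (81 * 0.722 * T3) * ∑' i : ℕ, (((i:ℝ)+8)^4)⁻¹ := tsum_mul_left
      _ ≤ (81 * 0.722 * T3) * (1/1008) := by
          have h8 := ZetaDerivAux.tsum_tail
          have : (0:ℝ) ≤ 81 * 0.722 * T3 := by positivity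
          nlinarith
      _ = 81 * 0.722 * (1/1008) * T3 := by ring
  -- total bound
  have hhead : ∑ i ∈ Finset.range 8, v i
      ≤ (4/9 + 81/256 * 0.909 + 81/625 * 0.844 + 1/16 * 0.794 + 81/2401 * 0.754) * T3 := by
    simp only [Finset.sum_range_succ, Finset.sum_range_zero]
    linarith
  have hS : ∑' n : ℕ, v n ≤ (99/100) * T3 := by
    have hsplit8 := Summable.sum_add_tsum_nat_add (f := v) 8 hv
    have hC : (4/9 + 81/256 * 0.909 + 81/625 * 0.844 + 1/16 * 0.794 + 81/2401 * 0.754)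
        + 81 * 0.722 * (1/1008) ≤ (99:ℝ)/100 := by norm_num
    nlinarith [hhead, htail, hsplit8, hT3]
  -- conclusion
  have hrest : ‖∑' n : ℕ, (if n = 3 then 0 else LSeries.term g s n)‖ ≤ (99/100) * T3 :=
    le_trans (norm_tsum_le_tsum_norm hv) hS
  have hlow : T3 - (99/100) * T3 ≤ ‖LSeries g s‖ := by
    have htri := norm_sub_norm_le (LSeries.term g s 3)
      (-(∑' n : ℕ, (if n = 3 then 0 else LSeries.term g s n)))
    rw [sub_neg_eq_add, norm_neg, hterm3, ← hsplit] at htri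
    linarith
  have hne : LSeries g s ≠ 0 := by
    intro h0
    rw [h0, norm_zero] at hlow
    nlinarith
  rw [heq]
  intro h0
  rcases mul_eq_zero.mp h0 with h | h
  · exact pow_ne_zero k (show (-1:ℂ) ≠ 0 by norm_num) h
  · exact hne h
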